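/- Let p, p̂ ∈ [0,1] be reals, n ≥ 2 an integer, and L ≥ 0 a real. If |p − p̂| ≤ √(2 p(1−p) L / n) + L/(3n) and |√(p(1−p)) − √(p̂(1−p̂))| ≤ √(2L/(n−1)), then |p − p̂| ≤ √(2 p̂(1−p̂) L / n) + 7L/(3(n−1)). -/
import Mathlib

/-- Converting a Bernstein-type bound in terms of the true variance into one in terms of
the empirical variance, using closeness of the standard deviations. -/
theorem bernstein_empirical_variance_bound
    (p phat : ℝ) (hp0 : 0 ≤ p) (hp1 : p ≤ 1) (hphat0 : 0 ≤ phat) (hphat1 : phat ≤ 1)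
    (n : ℕ) (hn : 2 ≤ n) (L : ℝ) (hL : 0 ≤ L)
    (h1 : |p - phat| ≤ Real.sqrt (2 * p * (1 - p) * L / n) + L / (3 * n))
    (h2 : |Real.sqrt (p * (1 - p)) - Real.sqrt (phat * (1 - phat))| ≤
      Real.sqrt (2 * L / ((n : ℝ) - 1))) :
    |p - phat| ≤ Real.sqrt (2 * phat * (1 - phat) * L / n) + 7 * L / (3 * ((n : ℝ) - 1)) := by
  have hn2 : (2:ℝ) ≤ (n:ℝ) := by exact_mod_cast hn
  have hn0 : (0:ℝ) < (n:ℝ) := by linarith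
  have hn1 : (0:ℝ) < (n:ℝ) - 1 := by linarith
  have hcn : 0 ≤ 2 * L / (n:ℝ) := by positivity
  have e1 : Real.sqrt (2 * p * (1 - p) * L / n)
      = Real.sqrt (2 * L / n) * Real.sqrt (p * (1 - p)) := by
    rw [← Real.sqrt_mul hcn]; ring_nf
  have e2 : Real.sqrt (2 * phat * (1 - phat) * L / n)
      = Real.sqrt (2 * L / n) * Real.sqrt (phat * (1 - phat)) := by
    rw [← Real.sqrt_mul hcn]; ring_nf
  have ha : Real.sqrt (p*(1-p)) ≤ Real.sqrt (phat*(1-phat)) + Real.sqrt (2*L/((n:ℝ)-1)) := by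
    have := (abs_le.mp h2).2
    linarith
  have hc : Real.sqrt (2*L/(n:ℝ)) * Real.sqrt (2*L/((n:ℝ)-1)) ≤ 2*L/((n:ℝ)-1) := by
    rw [← Real.sqrt_mul hcn]
    have hy : 0 ≤ 2*L/((n:ℝ)-1) := by positivity
    have hxy : 2*L/(n:ℝ) * (2*L/((n:ℝ)-1)) ≤ (2*L/((n:ℝ)-1))^2 := by
      have hx : 2*L/(n:ℝ) ≤ 2*L/((n:ℝ)-1) := by
        gcongr
        linarith
      nlinarith
    calc Real.sqrt (2*L/(n:ℝ) * (2*L/((n:ℝ)-1))) ≤ Real.sqrt ((2*L/((n:ℝ)-1))^2) :=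
          Real.sqrt_le_sqrt hxy
      _ = 2*L/((n:ℝ)-1) := Real.sqrt_sq hy
  have hmul : Real.sqrt (2*L/(n:ℝ)) * Real.sqrt (p*(1-p))
      ≤ Real.sqrt (2*L/(n:ℝ)) * (Real.sqrt (phat*(1-phat)) + Real.sqrt (2*L/((n:ℝ)-1))) :=
    mul_le_mul_of_nonneg_left ha (Real.sqrt_nonneg _)
  have hdiv : L / (3 * (n:ℝ)) ≤ L / (3 * ((n:ℝ)-1)) := by
    gcongr
    linarith
  rw [e2]
  rw [e1] at h1
  have : Real.sqrt (2*L/(n:ℝ)) * (Real.sqrt (phat*(1-phat)) + Real.sqrt (2*L/((n:ℝ)-1)))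
      = Real.sqrt (2*L/(n:ℝ)) * Real.sqrt (phat*(1-phat))
        + Real.sqrt (2*L/(n:ℝ)) * Real.sqrt (2*L/((n:ℝ)-1)) := by ring
  rw [this] at hmul
  have hfinal : 2*L/((n:ℝ)-1) + L / (3*((n:ℝ)-1)) = 7 * L / (3 * ((n:ℝ)-1)) := by
    field_simp; ring
  linarith
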